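/- Let n ≥ 1 be an integer and let T₀ = conv{ρ₀, ρ_u, ρ_v} and T₁ = conv{ρ₁, ρ_u, ρ_v} be two adjacent A_n-triangles in ℤ³. Then there exist a matrix g ∈ GL₃(ℤ) and integers a, b ∈ ℤ such that g·ρ₀ = (a, b, −1), g·ρ₁ = (0, 0, 1), g·ρ_u = (1, 0, 0) and g·ρ_v = (−n, n+1, 0). -/

import Mathlib

open Matrix

/-- The coordinatewise embedding `ℤ³ → ℝ³`. -/
def toR3 (v : Fin 3 → ℤ) : Fin 3 → ℝ := fun i => (v i : ℝ)

/-- The lattice length of the segment between two lattice points `p, q ∈ ℤ³`: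
the gcd of the coordinates of `q − p`. -/
def latticeLength (p q : Fin 3 → ℤ) : ℕ :=
  Int.gcd (q 0 - p 0) ((Int.gcd (q 1 - p 1) (q 2 - p 2) : ℕ) : ℤ)

/-- The relative interior of the triangle with vertices `a, b, c ∈ ℝ³`: points with all
barycentric coordinates (strictly) positive. -/
def relIntTriangle (a b c : Fin 3 → ℝ) : Set (Fin 3 → ℝ) :=
  {x | ∃ t₁ t₂ t₃ : ℝ, 0 < t₁ ∧ 0 < t₂ ∧ 0 < t₃ ∧ t₁ + t₂ + t₃ = 1 ∧
    x = t₁ • a + t₂ • b + t₃ • c}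

/-- An `Aₙ`-triangle in `ℤ³`: three affinely independent lattice points such that (1) the
relative interior of their convex hull contains no lattice point, (2) the edges have lattice
lengths `1`, `1`, `n+1`, (3) some linear form `w ∈ Hom(ℤ³, ℤ)` takes the value `1` on all
three vertices. -/
structure IsAnTriangle (n : ℕ) (v₁ v₂ v₃ : Fin 3 → ℤ) : Prop where
  affInd : AffineIndependent ℝ ![toR3 v₁, toR3 v₂, toR3 v₃]
  no_interior_point : ∀ p : Fin 3 → ℤ, toR3 p ∉ relIntTriangle (toR3 v₁) (toR3 v₂) (toR3 v₃)
  edge_lengths : ({latticeLength v₁ v₂, latticeLength v₂ v₃, latticeLength v₁ v₃} : Multiset ℕ)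
    = {1, 1, n + 1}
  height_one : ∃ w : Fin 3 → ℤ, w ⬝ᵥ v₁ = 1 ∧ w ⬝ᵥ v₂ = 1 ∧ w ⬝ᵥ v₃ = 1

/-- Two adjacent `Aₙ`-triangles `T₀ = conv{ρ₀, ρᵤ, ρᵥ}` and `T₁ = conv{ρ₁, ρᵤ, ρᵥ}` in `ℤ³`:
both are `Aₙ`-triangles, the common edge `conv{ρᵤ, ρᵥ}` is the edge of lattice length `n+1`
of both, and `ρ₀`, `ρ₁` lie in the two different open half-spaces of `ℝ³` determined by the
plane spanned by `ρᵤ` and `ρᵥ`. -/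
structure AreAdjacentAnTriangles (n : ℕ) (ρ₀ ρ₁ ρu ρv : Fin 3 → ℤ) : Prop where
  t₀ : IsAnTriangle n ρ₀ ρu ρv
  t₁ : IsAnTriangle n ρ₁ ρu ρv
  common_edge_length : latticeLength ρu ρv = n + 1
  opposite_sides : ∃ φ : (Fin 3 → ℝ) →ₗ[ℝ] ℝ,
    φ (toR3 ρu) = 0 ∧ φ (toR3 ρv) = 0 ∧ φ (toR3 ρ₀) < 0 ∧ 0 < φ (toR3 ρ₁)

section Helpers

open Matrix

lemma inv_of_det_pm {m : ℕ} (A : Matrix (Fin m) (Fin m) ℤ) (h : A.det = 1 ∨ A.det = -1) :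
    (A.det • A.adjugate) * A = 1 ∧ A * (A.det • A.adjugate) = 1 := by
  constructor
  · rw [smul_mul_assoc, Matrix.adjugate_mul, smul_smul]
    rcases h with h | h <;> simp [h]
  · rw [mul_smul_comm, Matrix.mul_adjugate, smul_smul]
    rcases h with h | h <;> simp [h]

lemma dvd_mulVec {m : ℕ} (A : Matrix (Fin m) (Fin m) ℤ) (x : Fin m → ℤ) (d : ℤ)
    (hd : ∀ i, d ∣ x i) (j : Fin m) : d ∣ A.mulVec x j := by
  unfold Matrix.mulVec dotProduct
  exact Finset.dvd_sum fun i _ => Dvd.dvd.mul_left (hd i) _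

def gcd3 (x : Fin 3 → ℤ) : ℕ := Int.gcd (x 0) ((Int.gcd (x 1) (x 2) : ℕ) : ℤ)

lemma gcd3_dvd (x : Fin 3 → ℤ) (i : Fin 3) : (gcd3 x : ℤ) ∣ x i := by
  fin_cases i
  · exact (Int.gcd_dvd_left _ _)
  · exact dvd_trans (Int.gcd_dvd_right _ _) (by exact_mod_cast (Int.gcd_dvd_left _ _))
  · exact dvd_trans (Int.gcd_dvd_right _ _) (by exact_mod_cast (Int.gcd_dvd_right _ _))

lemma dvd_gcd3 (x : Fin 3 → ℤ) (d : ℤ) (h : ∀ i, d ∣ x i) : d ∣ (gcd3 x : ℤ) :=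
  Int.dvd_coe_gcd (h 0) (by exact_mod_cast Int.dvd_coe_gcd (h 1) (h 2))

lemma gcd3_mulVec (A : Matrix (Fin 3) (Fin 3) ℤ) (h : A.det = 1 ∨ A.det = -1) (x : Fin 3 → ℤ) :
    gcd3 (A.mulVec x) = gcd3 x := by
  obtain ⟨hGA, -⟩ := inv_of_det_pm A h
  have hx : (A.det • A.adjugate).mulVec (A.mulVec x) = x := by
    rw [Matrix.mulVec_mulVec, hGA, Matrix.one_mulVec]
  apply Nat.dvd_antisymm
  · have : ((gcd3 (A.mulVec x) : ℤ)) ∣ (gcd3 x : ℤ) := by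
      apply dvd_gcd3
      intro i
      conv_rhs => rw [← hx]
      exact dvd_mulVec _ _ _ (gcd3_dvd _) i
    exact_mod_cast this
  · have : ((gcd3 x : ℤ)) ∣ (gcd3 (A.mulVec x) : ℤ) := by
      apply dvd_gcd3
      intro i
      exact dvd_mulVec _ _ _ (gcd3_dvd _) i
    exact_mod_cast this

def gcd2 (x : Fin 2 → ℤ) : ℕ := Int.gcd (x 0) (x 1)

lemma gcd2_dvd (x : Fin 2 → ℤ) (i : Fin 2) : (gcd2 x : ℤ) ∣ x i := by
  fin_cases i
  · exact (Int.gcd_dvd_left _ _)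
  · exact (Int.gcd_dvd_right _ _)

lemma dvd_gcd2 (x : Fin 2 → ℤ) (d : ℤ) (h : ∀ i, d ∣ x i) : d ∣ (gcd2 x : ℤ) :=
  Int.dvd_coe_gcd (h 0) (h 1)

lemma gcd2_mulVec (A : Matrix (Fin 2) (Fin 2) ℤ) (h : A.det = 1 ∨ A.det = -1) (x : Fin 2 → ℤ) :
    Int.gcd (A.mulVec x 0) (A.mulVec x 1) = Int.gcd (x 0) (x 1) := by
  obtain ⟨hGA, -⟩ := inv_of_det_pm A h
  have hx : (A.det • A.adjugate).mulVec (A.mulVec x) = x := by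
    rw [Matrix.mulVec_mulVec, hGA, Matrix.one_mulVec]
  show gcd2 (A.mulVec x) = gcd2 x
  apply Nat.dvd_antisymm
  · have : ((gcd2 (A.mulVec x) : ℤ)) ∣ (gcd2 x : ℤ) := by
      apply dvd_gcd2
      intro i
      conv_rhs => rw [← hx]
      exact dvd_mulVec _ _ _ (gcd2_dvd _) i
    exact_mod_cast this
  · have : ((gcd2 x : ℤ)) ∣ (gcd2 (A.mulVec x) : ℤ) := by
      apply dvd_gcd2
      intro i
      exact dvd_mulVec _ _ _ (gcd2_dvd _) i
    exact_mod_cast this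

lemma mulVec_fin2 (a b c d : ℤ) (x : Fin 2 → ℤ) :
    (!![a, b; c, d]).mulVec x = ![a * x 0 + b * x 1, c * x 0 + d * x 1] := by
  funext i
  fin_cases i <;> simp [Matrix.mulVec, dotProduct, Fin.sum_univ_two]

lemma mulVec_fin3 (a b c d e f g h i : ℤ) (x : Fin 3 → ℤ) :
    (!![a, b, c; d, e, f; g, h, i]).mulVec x =
      ![a * x 0 + b * x 1 + c * x 2, d * x 0 + e * x 1 + f * x 2, g * x 0 + h * x 1 + i * x 2] := by
  funext j
  fin_cases j <;> simp [Matrix.mulVec, dotProduct, Fin.sum_univ_three]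

def empty2 (u v : Fin 2 → ℤ) : Prop :=
  ∀ pt : Fin 2 → ℤ, ¬∃ t₁ t₂ t₃ : ℝ, 0 < t₁ ∧ 0 < t₂ ∧ 0 < t₃ ∧ t₁ + t₂ + t₃ = 1 ∧
    ((pt 0 : ℝ) = t₂ * u 0 + t₃ * v 0) ∧ ((pt 1 : ℝ) = t₂ * u 1 + t₃ * v 1)

lemma empty2_transfer (M G : Matrix (Fin 2) (Fin 2) ℤ) (hGM : G * M = 1)
    (u v : Fin 2 → ℤ) (he : empty2 u v) : empty2 (M.mulVec u) (M.mulVec v) := by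
  intro pt ⟨t₁, t₂, t₃, ht₁, ht₂, ht₃, hsum, h0, h1⟩
  have hu : G.mulVec (M.mulVec u) = u := by
    rw [Matrix.mulVec_mulVec, hGM, Matrix.one_mulVec]
  have hv : G.mulVec (M.mulVec v) = v := by
    rw [Matrix.mulVec_mulVec, hGM, Matrix.one_mulVec]
  have hu0 := congrArg (Int.cast : ℤ → ℝ) (congrFun hu 0)
  have hv0 := congrArg (Int.cast : ℤ → ℝ) (congrFun hv 0)
  have hu1 := congrArg (Int.cast : ℤ → ℝ) (congrFun hu 1)
  have hv1 := congrArg (Int.cast : ℤ → ℝ) (congrFun hv 1)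
  simp only [Matrix.mulVec, dotProduct, Fin.sum_univ_two] at hu0 hv0 hu1 hv1 h0 h1
  push_cast at hu0 hv0 hu1 hv1 h0 h1
  apply he (G.mulVec pt)
  refine ⟨t₁, t₂, t₃, ht₁, ht₂, ht₃, hsum, ?_, ?_⟩
  · simp only [Matrix.mulVec, dotProduct, Fin.sum_univ_two]
    push_cast
    linear_combination (G 0 0 : ℝ) * h0 + (G 0 1 : ℝ) * h1 + t₂ * hu0 + t₃ * hv0
  · simp only [Matrix.mulVec, dotProduct, Fin.sum_univ_two]
    push_cast
    linear_combination (G 1 0 : ℝ) * h0 + (G 1 1 : ℝ) * h1 + t₂ * hu1 + t₃ * hv1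

lemma height_eq (n : ℕ) (hn : 1 ≤ n) (p q : ℤ) (hq : 0 < q)
    (h1 : Int.gcd p q = 1) (h2 : Int.gcd (p - 1) q = n + 1)
    (he : empty2 ![1, 0] ![p, q]) : q = (n : ℤ) + 1 := by
  have hdvd : ((n : ℤ) + 1) ∣ q := by
    have := Int.gcd_dvd_right (a := p - 1) (b := q)
    rwa [h2] at this
  by_contra hne
  obtain ⟨k, hk⟩ := hdvd
  have hn1 : (0:ℤ) < (n:ℤ) + 1 := by positivity
  have hkpos : 0 < k := by nlinarith [hk]
  have hk2 : 2 ≤ k := by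
    by_contra hcon
    have hk1 : k = 1 := by omega
    apply hne; rw [hk, hk1, mul_one]
  have hq2 : 2 * ((n:ℤ) + 1) ≤ q := by nlinarith
  have hnn : (1:ℤ) ≤ (n:ℤ) := by exact_mod_cast hn
  have hq4 : (4:ℤ) ≤ q := by nlinarith
  set r := p % q with hr
  have hr0 : 0 ≤ r := Int.emod_nonneg p (by omega)
  have hrq : r < q := Int.emod_lt_of_pos p (by omega)
  have hdiv : q * (p / q) + r = p := Int.mul_ediv_add_emod p q
  have hrne0 : r ≠ 0 := by
    intro h0
    have hqp : q ∣ p := Int.dvd_of_emod_eq_zero h0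
    have : q.natAbs ∣ Int.gcd p q := Nat.dvd_gcd (Int.natAbs_dvd_natAbs.mpr hqp) dvd_rfl
    rw [h1] at this
    have := Nat.le_of_dvd one_pos this
    omega
  have hrne1 : r ≠ 1 := by
    intro h0
    have h1q : (1:ℤ) % q = 1 := Int.emod_eq_of_lt (by omega) (by omega)
    have hmod : (p - 1) % q = 0 := by
      rw [Int.sub_emod, ← hr, h0, h1q]
      simp
    have hqp : q ∣ (p - 1) := Int.dvd_of_emod_eq_zero hmod
    have hd : q.natAbs ∣ Int.gcd (p-1) q := Nat.dvd_gcd (Int.natAbs_dvd_natAbs.mpr hqp) dvd_rfl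
    rw [h2] at hd
    have := Nat.le_of_dvd (by omega) hd
    omega
  have hr2 : 2 ≤ r := by omega
  apply he ![p / q + 1, 1]
  have hqR : (0:ℝ) < (q:ℝ) := by exact_mod_cast hq
  have hqR' : (q:ℝ) ≠ 0 := ne_of_gt hqR
  have hrR : (2:ℝ) ≤ (r:ℝ) := by exact_mod_cast hr2
  have hrqR : (r:ℝ) < (q:ℝ) := by exact_mod_cast hrq
  have hdivR : (q:ℝ) * ((p / q : ℤ) : ℝ) + (r:ℝ) = (p:ℝ) := by exact_mod_cast hdiv
  have e0 : (((p / q + 1 : ℤ)) : ℝ) = ((q:ℝ) - r) / q * ((1:ℤ):ℝ) + 1 / q * ((p:ℤ):ℝ) := by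
    push_cast
    field_simp
    linear_combination hdivR
  have e1 : ((1:ℤ) : ℝ) = ((q:ℝ) - r) / q * ((0:ℤ):ℝ) + 1 / q * ((q:ℤ):ℝ) := by
    push_cast
    field_simp
    ring
  refine ⟨((r:ℝ) - 1) / q, ((q:ℝ) - r) / q, 1 / q, ?_, ?_, ?_, ?_, ?_, ?_⟩
  · exact div_pos (by linarith) hqR
  · exact div_pos (by linarith) hqR
  · positivity
  · field_simp; ring
  · simpa using e0
  · simpa using e1

lemma twoD_pos (n : ℕ) (hn : 1 ≤ n) (p q : ℤ) (hq : 0 < q)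
    (h1 : Int.gcd p q = 1) (h2 : Int.gcd (p - 1) q = n + 1)
    (he : empty2 ![1, 0] ![p, q]) :
    ∃ h : Matrix (Fin 2) (Fin 2) ℤ, (h.det = 1 ∨ h.det = -1) ∧
      h.mulVec ![1, 0] = ![1, 0] ∧ h.mulVec ![p, q] = ![-(n : ℤ), (n : ℤ) + 1] := by
  have hq' : q = (n : ℤ) + 1 := height_eq n hn p q hq h1 h2 he
  have hdvd : ((n : ℤ) + 1) ∣ p - 1 := by
    have := Int.gcd_dvd_left (a := p - 1) (b := q)
    rwa [h2] at this
  have hdvd' : ((n : ℤ) + 1) ∣ p + n := by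
    have heq : p + (n:ℤ) = (p - 1) + ((n:ℤ) + 1) := by ring
    rw [heq]
    exact dvd_add hdvd dvd_rfl
  set m := -((p + (n:ℤ)) / ((n:ℤ) + 1)) with hm
  have hmn : m * ((n:ℤ) + 1) = -(p + n) := by
    rw [hm, neg_mul]
    congr 1
    exact Int.ediv_mul_cancel hdvd'
  refine ⟨!![1, m; 0, 1], ?_, ?_, ?_⟩
  · left; simp [Matrix.det_fin_two_of]
  · rw [mulVec_fin2]; norm_num
  · rw [mulVec_fin2]
    funext i
    fin_cases i <;> simp [hq'] <;> linarith [hmn]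

lemma twoD (n : ℕ) (hn : 1 ≤ n) (u v : Fin 2 → ℤ)
    (hu : Int.gcd (u 0) (u 1) = 1) (hv : Int.gcd (v 0) (v 1) = 1)
    (huv : Int.gcd (v 0 - u 0) (v 1 - u 1) = n + 1)
    (he : empty2 u v) :
    ∃ h : Matrix (Fin 2) (Fin 2) ℤ, (h.det = 1 ∨ h.det = -1) ∧
      h.mulVec u = ![1, 0] ∧ h.mulVec v = ![-(n : ℤ), (n : ℤ) + 1] := by
  set x := Int.gcdA (u 0) (u 1) with hx
  set y := Int.gcdB (u 0) (u 1) with hy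
  have hbez : u 0 * x + u 1 * y = 1 := by
    have h := Int.gcd_eq_gcd_ab (u 0) (u 1)
    rw [hu] at h
    exact_mod_cast h.symm
  set h₁ : Matrix (Fin 2) (Fin 2) ℤ := !![x, y; -(u 1), u 0] with hh₁
  have hdet1 : h₁.det = 1 := by
    rw [hh₁, Matrix.det_fin_two_of]
    linarith
  obtain ⟨hGM, -⟩ := inv_of_det_pm h₁ (Or.inl hdet1)
  have hu' : h₁.mulVec u = ![1, 0] := by
    rw [hh₁, mulVec_fin2]
    funext i
    fin_cases i
    · simp; linarith [hbez]
    · simp; ring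
  set p := (h₁.mulVec v) 0 with hp
  set q := (h₁.mulVec v) 1 with hq
  have hpq : h₁.mulVec v = ![p, q] := by
    funext i; fin_cases i <;> rfl
  have hv' : Int.gcd p q = 1 := by
    rw [hp, hq, gcd2_mulVec h₁ (Or.inl hdet1) v, hv]
  have huv' : Int.gcd (p - 1) q = n + 1 := by
    have hsub : h₁.mulVec (v - u) = ![p - 1, q] := by
      rw [Matrix.mulVec_sub, hpq, hu']
      funext i; fin_cases i <;> simp
    have := gcd2_mulVec h₁ (Or.inl hdet1) (v - u)
    rw [hsub] at this
    simp only [Pi.sub_apply] at this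
    rw [huv] at this
    simpa using this
  have he' : empty2 ![1, 0] ![p, q] := by
    have := empty2_transfer h₁ (h₁.det • h₁.adjugate) hGM u v he
    rwa [hu', hpq] at this
  rcases lt_trichotomy q 0 with hq0 | hq0 | hq0
  · -- q < 0 : flip
    set F : Matrix (Fin 2) (Fin 2) ℤ := !![1, 0; 0, -1] with hF
    have hFdet : F.det = -1 := by rw [hF, Matrix.det_fin_two_of]; ring
    have hFF : F * F = 1 := by
      rw [hF]
      norm_num [Matrix.mul_fin_two, ← Matrix.one_fin_two]
    have hF1 : F.mulVec ![1, 0] = ![1, 0] := by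
      rw [hF, mulVec_fin2]; norm_num
    have hFpq : F.mulVec ![p, q] = ![p, -q] := by
      rw [hF, mulVec_fin2]
      funext i; fin_cases i <;> simp
    have he'' : empty2 ![1, 0] ![p, -q] := by
      have := empty2_transfer F F hFF ![1, 0] ![p, q] he'
      rwa [hF1, hFpq] at this
    have hg1 : Int.gcd p (-q) = 1 := by
      rw [Int.gcd, Int.natAbs_neg, ← Int.gcd]; assumption
    have hg2 : Int.gcd (p - 1) (-q) = n + 1 := by
      rw [Int.gcd, Int.natAbs_neg, ← Int.gcd]; assumption
    obtain ⟨h', hd', hu'', hv''⟩ := twoD_pos n hn p (-q) (by omega) hg1 hg2 he''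
    refine ⟨h' * F * h₁, ?_, ?_, ?_⟩
    · rw [Matrix.det_mul, Matrix.det_mul, hdet1, hFdet]
      rcases hd' with h | h <;> rw [h] <;> norm_num
    · rw [← Matrix.mulVec_mulVec, ← Matrix.mulVec_mulVec, hu', hF1, hu'']
    · rw [← Matrix.mulVec_mulVec, ← Matrix.mulVec_mulVec, hpq, hFpq, hv'']
  · -- q = 0 : contradiction
    exfalso
    have hp1 : p.natAbs = 1 := by
      have := hv'; rw [hq0] at this; simpa [Int.gcd] using this
    have hp2 : (p - 1).natAbs = n + 1 := by
      have := huv'; rw [hq0] at this; simpa [Int.gcd] using this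
    have hpm1 : p = -1 := by omega
    apply he' ![0, 0]
    refine ⟨1/2, 1/4, 1/4, by norm_num, by norm_num, by norm_num, by norm_num, ?_, ?_⟩
    · simp [hpm1]
    · simp [hq0]
  · -- q > 0
    obtain ⟨h', hd', hu'', hv''⟩ := twoD_pos n hn p q hq0 hv' huv' he'
    refine ⟨h' * h₁, ?_, ?_, ?_⟩
    · rw [Matrix.det_mul, hdet1]
      rcases hd' with h | h <;> rw [h] <;> norm_num
    · rw [← Matrix.mulVec_mulVec, hu', hu'']
    · rw [← Matrix.mulVec_mulVec, hpq, hv'']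

lemma row_completion (w : Fin 3 → ℤ) (hw : Int.gcd (w 0) ((Int.gcd (w 1) (w 2) : ℕ) : ℤ) = 1) :
    ∃ A : Matrix (Fin 3) (Fin 3) ℤ, (A.det = 1 ∨ A.det = -1) ∧
      ∀ x : Fin 3 → ℤ, A.mulVec x 2 = w 0 * x 0 + w 1 * x 1 + w 2 * x 2 := by
  set d : ℕ := Int.gcd (w 1) (w 2) with hd
  by_cases hd0 : d = 0
  · have h12 : w 1 = 0 ∧ w 2 = 0 := Int.gcd_eq_zero_iff.mp hd0
    have hw0 : w 0 = 1 ∨ w 0 = -1 := by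
      rw [hd0] at hw
      simp [Int.gcd] at hw
      omega
    refine ⟨!![0, 1, 0; 0, 0, 1; w 0, w 1, w 2], ?_, ?_⟩
    · rw [Matrix.det_fin_three]
      simp [h12.1, h12.2]
      tauto
    · intro x
      rw [mulVec_fin3]
      simp
  · have hdZ : ((d:ℕ):ℤ) ≠ 0 := by exact_mod_cast hd0
    set x' := Int.gcdA (w 1) (w 2) with hx'
    set y' := Int.gcdB (w 1) (w 2) with hy'
    have hbez2 : w 1 * x' + w 2 * y' = (d : ℤ) := (Int.gcd_eq_gcd_ab (w 1) (w 2)).symm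
    set b' := w 1 / (d : ℤ) with hb'
    set c' := w 2 / (d : ℤ) with hc'
    have hb : b' * (d:ℤ) = w 1 := Int.ediv_mul_cancel (Int.gcd_dvd_left _ _)
    have hc : c' * (d:ℤ) = w 2 := Int.ediv_mul_cancel (Int.gcd_dvd_right _ _)
    have hbez2' : x' * b' + y' * c' = 1 := by
      have h : (x' * b' + y' * c') * (d:ℤ) = 1 * (d:ℤ) := by
        rw [add_mul, mul_assoc, mul_assoc, hb, hc, one_mul]
        linear_combination hbez2
      exact mul_right_cancel₀ hdZ h
    have hgxy : Int.gcd x' y' = 1 := by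
      have h1 : (Int.gcd x' y' : ℤ) ∣ 1 := by
        rw [← hbez2']
        exact dvd_add (Dvd.dvd.mul_right (Int.gcd_dvd_left _ _) b') (Dvd.dvd.mul_right (Int.gcd_dvd_right _ _) c')
      have h2 : Int.gcd x' y' ∣ 1 := by exact_mod_cast h1
      exact Nat.dvd_one.mp h2
    set u₂ := Int.gcdA x' y' with hu₂
    set u₃ := Int.gcdB x' y' with hu₃
    have hbez3 : x' * u₂ + y' * u₃ = 1 := by
      have h := Int.gcd_eq_gcd_ab x' y'
      rw [hgxy] at h
      exact_mod_cast h.symm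
    set s := Int.gcdA (w 0) ((d:ℕ):ℤ) with hs
    set t := Int.gcdB (w 0) ((d:ℕ):ℤ) with ht
    have hbez1 : w 0 * s + (d:ℤ) * t = 1 := by
      have h := Int.gcd_eq_gcd_ab (w 0) ((d:ℕ):ℤ)
      rw [hw] at h
      exact_mod_cast h.symm
    refine ⟨!![-t, s * u₂, s * u₃; 0, -y', x'; w 0, w 1, w 2], ?_, ?_⟩
    · left
      rw [Matrix.det_fin_three]
      simp
      linear_combination t * hbez2 + (w 0 * s) * hbez3 + hbez1
    · intro x
      rw [mulVec_fin3]
      simp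

lemma gcd_plane (x0 x1 x2 s : ℤ) (h : x0 + x1 + s * x2 = 0) :
    Int.gcd x0 ((Int.gcd x1 x2 : ℕ) : ℤ) = Int.gcd x0 x2 := by
  apply Nat.dvd_antisymm
  · have h1 : ((Int.gcd x0 ((Int.gcd x1 x2 : ℕ) : ℤ) : ℕ) : ℤ) ∣ x0 := (Int.gcd_dvd_left _ _)
    have h2 : ((Int.gcd x0 ((Int.gcd x1 x2 : ℕ) : ℤ) : ℕ) : ℤ) ∣ x2 :=
      dvd_trans (Int.gcd_dvd_right _ _) (by exact_mod_cast (Int.gcd_dvd_right _ _))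
    have := Int.dvd_coe_gcd h1 h2
    exact_mod_cast this
  · have h1 : ((Int.gcd x0 x2 : ℕ) : ℤ) ∣ x0 := (Int.gcd_dvd_left _ _)
    have h2 : ((Int.gcd x0 x2 : ℕ) : ℤ) ∣ x2 := (Int.gcd_dvd_right _ _)
    have h3 : ((Int.gcd x0 x2 : ℕ) : ℤ) ∣ x1 := by
      have heq : x1 = -x0 - s * x2 := by linarith
      rw [heq]
      exact dvd_sub (dvd_neg.mpr h1) (Dvd.dvd.mul_left h2 s)
    have h4 := Int.dvd_coe_gcd h3 h2
    have := Int.dvd_coe_gcd h1 (by exact_mod_cast h4 : ((Int.gcd x0 x2 : ℕ) : ℤ) ∣ ((Int.gcd x1 x2 : ℕ) : ℤ))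
    exact_mod_cast this

lemma gcd_zero_aux (a b : ℤ) : Int.gcd a ((Int.gcd b 0 : ℕ) : ℤ) = Int.gcd a b := by
  unfold Int.gcd
  simp [Int.natAbs_abs]

lemma vec3_eq {α : Type*} (v w : Fin 3 → α) (h0 : v 0 = w 0) (h1 : v 1 = w 1)
    (h2 : v 2 = w 2) : v = w := by
  funext i; fin_cases i <;> assumption

lemma mat2_eq (M N : Matrix (Fin 2) (Fin 2) ℤ) (h00 : M 0 0 = N 0 0) (h01 : M 0 1 = N 0 1)
    (h10 : M 1 0 = N 1 0) (h11 : M 1 1 = N 1 1) : M = N := by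
  funext i j; fin_cases i <;> fin_cases j <;> assumption

lemma det_fin3_of (a b c d e f g h i : ℤ) :
    (!![a, b, c; d, e, f; g, h, i]).det = a*e*i - a*f*h - b*d*i + b*f*g + c*d*h - c*e*g := by
  rw [Matrix.det_fin_three]
  simp

lemma multiset_extract (n a c : ℕ) (hn : 1 ≤ n)
    (hm : ({a, n + 1, c} : Multiset ℕ) = {1, 1, n + 1}) : a = 1 ∧ c = 1 := by
  have h1 := congrArg (Multiset.count 1) hm
  have h2 := congrArg (Multiset.count (n+1)) hm
  simp [Multiset.count_cons, Multiset.count_singleton] at h1 h2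
  by_cases ha : a = 1 <;> by_cases hc : c = 1 <;>
    simp [ha, hc] at h1 h2 ⊢ <;> split_ifs at h1 h2 <;> omega

end Helpers

section Main

open Matrix

lemma toR3_mulVec (M : Matrix (Fin 3) (Fin 3) ℤ) (x : Fin 3 → ℤ) :
    toR3 (M.mulVec x) = (M.map (Int.cast : ℤ → ℝ)).mulVec (toR3 x) := by
  funext i
  simp [toR3, Matrix.mulVec, dotProduct, Fin.sum_univ_three]

lemma relint_image (M : Matrix (Fin 3) (Fin 3) ℤ) (a b c x : Fin 3 → ℤ)
    (h : toR3 x ∈ relIntTriangle (toR3 a) (toR3 b) (toR3 c)) :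
    toR3 (M.mulVec x) ∈
      relIntTriangle (toR3 (M.mulVec a)) (toR3 (M.mulVec b)) (toR3 (M.mulVec c)) := by
  obtain ⟨t₁, t₂, t₃, h1, h2, h3, hs, hx⟩ := h
  refine ⟨t₁, t₂, t₃, h1, h2, h3, hs, ?_⟩
  rw [toR3_mulVec, toR3_mulVec, toR3_mulVec, toR3_mulVec, hx]
  rw [Matrix.mulVec_add, Matrix.mulVec_add, Matrix.mulVec_smul, Matrix.mulVec_smul,
    Matrix.mulVec_smul]

lemma lattice_eq_gcd3 (p q : Fin 3 → ℤ) : latticeLength p q = gcd3 (q - p) := rfl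

set_option maxHeartbeats 3200000 in
/-- Two adjacent `Aₙ`-triangles can be put in normal form by a
`GL₃(ℤ)`-transformation: there are `g ∈ GL₃(ℤ)` and `a, b ∈ ℤ` with `g·ρ₀ = (a, b, −1)`,
`g·ρ₁ = (0, 0, 1)`, `g·ρᵤ = (1, 0, 0)`, `g·ρᵥ = (−n, n+1, 0)`. -/
theorem adjacent_An_triangles_normal_form
    (n : ℕ) (hn : 1 ≤ n) (ρ₀ ρ₁ ρu ρv : Fin 3 → ℤ)
    (h : AreAdjacentAnTriangles n ρ₀ ρ₁ ρu ρv) :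
    ∃ g : Matrix (Fin 3) (Fin 3) ℤ, (g.det = 1 ∨ g.det = -1) ∧ ∃ a b : ℤ,
      g.mulVec ρ₀ = ![a, b, -1] ∧ g.mulVec ρ₁ = ![0, 0, 1] ∧
      g.mulVec ρu = ![1, 0, 0] ∧ g.mulVec ρv = ![-(n : ℤ), (n : ℤ) + 1, 0] := by
  obtain ⟨w, hw1, hwu, hwv⟩ := h.t₁.height_one
  -- edge lengths
  have hT1m := h.t₁.edge_lengths
  rw [h.common_edge_length] at hT1m
  obtain ⟨hL1u, hL1v⟩ := multiset_extract n _ _ hn hT1m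
  have hT0m := h.t₀.edge_lengths
  rw [h.common_edge_length] at hT0m
  obtain ⟨hL0u, hL0v⟩ := multiset_extract n _ _ hn hT0m
  -- w is primitive
  have hwprim : Int.gcd (w 0) ((Int.gcd (w 1) (w 2) : ℕ) : ℤ) = 1 := by
    have hdvd : ((gcd3 w : ℕ) : ℤ) ∣ 1 := by
      rw [← hw1]
      unfold dotProduct
      exact Finset.dvd_sum fun i _ => Dvd.dvd.mul_right (gcd3_dvd w i) _
    have : gcd3 w ∣ 1 := by exact_mod_cast hdvd
    exact Nat.dvd_one.mp this
  obtain ⟨A, hAdet, hArow⟩ := row_completion w hwprim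
  have hwx : ∀ x : Fin 3 → ℤ, w ⬝ᵥ x = w 0 * x 0 + w 1 * x 1 + w 2 * x 2 := by
    intro x
    simp [dotProduct, Fin.sum_univ_three]
  set α := (A.mulVec ρ₁) 0 with hα
  set β := (A.mulVec ρ₁) 1 with hβ
  have hA2 : (A.mulVec ρ₁) 2 = 1 := by rw [hArow, ← hwx, hw1]
  set S : Matrix (Fin 3) (Fin 3) ℤ := !![1, 0, -α; 0, 1, -β; 0, 0, 1] with hS
  have hSdet : S.det = 1 := by rw [hS, det_fin3_of]; ring
  set g₁ := S * A with hg₁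
  have hg₁det : g₁.det = 1 ∨ g₁.det = -1 := by
    rw [hg₁, Matrix.det_mul, hSdet, one_mul]; exact hAdet
  have hg₁x2 : ∀ x : Fin 3 → ℤ, (g₁.mulVec x) 2 = w ⬝ᵥ x := by
    intro x
    rw [hg₁, ← Matrix.mulVec_mulVec, hS, mulVec_fin3, hwx, ← hArow]
    simp
  have hg₁ρ₁ : g₁.mulVec ρ₁ = ![0, 0, 1] := by
    rw [hg₁, ← Matrix.mulVec_mulVec, hS, mulVec_fin3]
    funext i
    fin_cases i <;> simp [← hα, ← hβ, hA2] <;> ring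
  set u' : Fin 2 → ℤ := ![(g₁.mulVec ρu) 0, (g₁.mulVec ρu) 1] with hu'
  set v' : Fin 2 → ℤ := ![(g₁.mulVec ρv) 0, (g₁.mulVec ρv) 1] with hv'
  have hg₁ρu : g₁.mulVec ρu = ![u' 0, u' 1, 1] := by
    funext i
    fin_cases i
    · rfl
    · rfl
    · show (g₁.mulVec ρu) 2 = 1
      rw [hg₁x2, hwu]
  have hg₁ρv : g₁.mulVec ρv = ![v' 0, v' 1, 1] := by
    funext i
    fin_cases i
    · rfl
    · rfl
    · show (g₁.mulVec ρv) 2 = 1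
      rw [hg₁x2, hwv]
  -- gcd conditions for u', v'
  have hsubu : g₁.mulVec (ρu - ρ₁) = ![u' 0, u' 1, 0] := by
    rw [Matrix.mulVec_sub, hg₁ρu, hg₁ρ₁]
    funext i; fin_cases i <;> simp
  have hsubv : g₁.mulVec (ρv - ρ₁) = ![v' 0, v' 1, 0] := by
    rw [Matrix.mulVec_sub, hg₁ρv, hg₁ρ₁]
    funext i; fin_cases i <;> simp
  have hsubuv : g₁.mulVec (ρv - ρu) = ![v' 0 - u' 0, v' 1 - u' 1, 0] := by
    rw [Matrix.mulVec_sub, hg₁ρv, hg₁ρu]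
    funext i; fin_cases i <;> simp
  have hgu1 : Int.gcd (u' 0) (u' 1) = 1 := by
    have h1 := gcd3_mulVec g₁ hg₁det (ρu - ρ₁)
    rw [hsubu, ← lattice_eq_gcd3 ρ₁ ρu] at h1
    rw [hL1u] at h1
    have h2 : gcd3 ![u' 0, u' 1, 0] = Int.gcd (u' 0) (u' 1) := by
      unfold gcd3
      exact gcd_zero_aux (u' 0) (u' 1)
    rw [← h2, h1]
  have hgv1 : Int.gcd (v' 0) (v' 1) = 1 := by
    have h1 := gcd3_mulVec g₁ hg₁det (ρv - ρ₁)
    rw [hsubv, ← lattice_eq_gcd3 ρ₁ ρv] at h1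
    rw [hL1v] at h1
    have h2 : gcd3 ![v' 0, v' 1, 0] = Int.gcd (v' 0) (v' 1) := gcd_zero_aux _ _
    rw [← h2, h1]
  have hguv1 : Int.gcd (v' 0 - u' 0) (v' 1 - u' 1) = n + 1 := by
    have h1 := gcd3_mulVec g₁ hg₁det (ρv - ρu)
    rw [hsubuv, ← lattice_eq_gcd3 ρu ρv] at h1
    rw [h.common_edge_length] at h1
    have h2 : gcd3 ![v' 0 - u' 0, v' 1 - u' 1, 0] = Int.gcd (v' 0 - u' 0) (v' 1 - u' 1) :=
      gcd_zero_aux _ _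
    rw [← h2, h1]
  -- emptiness for u', v'
  obtain ⟨hG₁g₁, hg₁G₁⟩ := inv_of_det_pm g₁ hg₁det
  set G₁ := g₁.det • g₁.adjugate with hG₁def
  have hempty1 : empty2 u' v' := by
    intro pt ⟨t₁, t₂, t₃, ht₁, ht₂, ht₃, hsum, hpt0, hpt1⟩
    have hmem : toR3 (![pt 0, pt 1, 1] : Fin 3 → ℤ) ∈ relIntTriangle (toR3 (g₁.mulVec ρ₁)) (toR3 (g₁.mulVec ρu))
        (toR3 (g₁.mulVec ρv)) := by
      refine ⟨t₁, t₂, t₃, ht₁, ht₂, ht₃, hsum, ?_⟩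
      rw [hg₁ρ₁, hg₁ρu, hg₁ρv]
      refine vec3_eq _ _ ?_ ?_ ?_ <;>
        simp only [toR3, Pi.add_apply, Pi.smul_apply, smul_eq_mul, Matrix.cons_val_zero,
          Matrix.cons_val_one, Matrix.head_cons, Matrix.cons_val_two, Matrix.tail_cons] <;>
        push_cast
      · linarith [hpt0]
      · linarith [hpt1]
      · linarith [hsum]
    have hmem2 := relint_image G₁ (g₁.mulVec ρ₁) (g₁.mulVec ρu) (g₁.mulVec ρv) ![pt 0, pt 1, 1] hmem
    rw [Matrix.mulVec_mulVec, Matrix.mulVec_mulVec, Matrix.mulVec_mulVec, hG₁g₁,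
      Matrix.one_mulVec, Matrix.one_mulVec, Matrix.one_mulVec] at hmem2
    exact h.t₁.no_interior_point (G₁.mulVec ![pt 0, pt 1, 1]) hmem2
  obtain ⟨h2m, hh2det, hh2u, hh2v⟩ := twoD n hn u' v' hgu1 hgv1 hguv1 hempty1
  -- build H and K
  set H : Matrix (Fin 3) (Fin 3) ℤ :=
    !![h2m 0 0, h2m 0 1, 0; h2m 1 0, h2m 1 1, 0; 0, 0, 1] with hH
  have hHdet : H.det = 1 ∨ H.det = -1 := by
    have : H.det = h2m.det := by
      rw [hH, det_fin3_of, Matrix.det_fin_two]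
      ring
    rw [this]; exact hh2det
  have hh2u0 := congrFun hh2u 0
  have hh2u1 := congrFun hh2u 1
  have hh2v0 := congrFun hh2v 0
  have hh2v1 := congrFun hh2v 1
  simp only [Matrix.mulVec, dotProduct, Fin.sum_univ_two, Matrix.cons_val_zero,
    Matrix.cons_val_one, Matrix.head_cons] at hh2u0 hh2u1 hh2v0 hh2v1
  have hHu : H.mulVec ![u' 0, u' 1, 1] = ![1, 0, 1] := by
    rw [hH, mulVec_fin3]
    funext i
    fin_cases i
    · simpa using hh2u0
    · simpa using hh2u1
    · simp
  have hHv : H.mulVec ![v' 0, v' 1, 1] = ![-(n:ℤ), (n:ℤ) + 1, 1] := by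
    rw [hH, mulVec_fin3]
    funext i
    fin_cases i
    · simpa using hh2v0
    · simpa using hh2v1
    · simp
  have hHe : H.mulVec ![0, 0, 1] = ![0, 0, 1] := by
    rw [hH, mulVec_fin3]
    funext i
    fin_cases i <;> simp
  set K : Matrix (Fin 3) (Fin 3) ℤ := !![1, 0, 0; 0, 1, 0; -1, -1, 1] with hK
  have hKdet : K.det = 1 := by rw [hK, det_fin3_of]; ring
  set g := K * (H * g₁) with hgdef
  have hgdet : g.det = 1 ∨ g.det = -1 := by
    rw [hgdef, Matrix.det_mul, Matrix.det_mul, hKdet, one_mul]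
    rcases hHdet with h1 | h1 <;> rcases hg₁det with h2 | h2 <;> rw [h1, h2] <;> norm_num
  have hgρ₁ : g.mulVec ρ₁ = ![0, 0, 1] := by
    rw [hgdef, ← Matrix.mulVec_mulVec, ← Matrix.mulVec_mulVec, hg₁ρ₁, hHe, hK, mulVec_fin3]
    funext i; fin_cases i <;> simp
  have hgρu : g.mulVec ρu = ![1, 0, 0] := by
    rw [hgdef, ← Matrix.mulVec_mulVec, ← Matrix.mulVec_mulVec, hg₁ρu, hHu, hK, mulVec_fin3]
    funext i; fin_cases i <;> simp
  have hgρv : g.mulVec ρv = ![-(n:ℤ), (n:ℤ) + 1, 0] := by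
    rw [hgdef, ← Matrix.mulVec_mulVec, ← Matrix.mulVec_mulVec, hg₁ρv, hHv, hK, mulVec_fin3]
    funext i; fin_cases i <;> simp <;> ring
  -- now ρ₀
  obtain ⟨hGg, hgG⟩ := inv_of_det_pm g hgdet
  set G := g.det • g.adjugate with hGdef
  set aa := (g.mulVec ρ₀) 0 with haa
  set bb := (g.mulVec ρ₀) 1 with hbb
  set cc := (g.mulVec ρ₀) 2 with hcc
  have hgρ₀ : g.mulVec ρ₀ = ![aa, bb, cc] := by
    funext i; fin_cases i <;> rfl
  have hback : ∀ y : Fin 3 → ℤ, G.mulVec (g.mulVec y) = y := by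
    intro y
    rw [Matrix.mulVec_mulVec, hGg, Matrix.one_mulVec]
  -- c < 0 via the separating functional
  obtain ⟨φ, hφu, hφv, hφ0, hφ1⟩ := h.opposite_sides
  have hdecomp : ∀ x y z : ℤ, toR3 (G.mulVec ![x, y, z]) =
      (x : ℝ) • toR3 (G.mulVec ![1, 0, 0]) + (y : ℝ) • toR3 (G.mulVec ![0, 1, 0]) +
      (z : ℝ) • toR3 (G.mulVec ![0, 0, 1]) := by
    intro x y z
    funext i
    simp only [toR3, Matrix.mulVec, dotProduct, Fin.sum_univ_three, Pi.add_apply,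
      Pi.smul_apply, smul_eq_mul, Matrix.cons_val_zero, Matrix.cons_val_one, Matrix.head_cons,
      Matrix.cons_val_two, Matrix.tail_cons]
    push_cast
    ring
  have hρu_eq : ρu = G.mulVec ![1, 0, 0] := by rw [← hgρu, hback]
  have hρv_eq : ρv = G.mulVec ![-(n:ℤ), (n:ℤ) + 1, 0] := by rw [← hgρv, hback]
  have hρ₁_eq : ρ₁ = G.mulVec ![0, 0, 1] := by rw [← hgρ₁, hback]
  have hρ₀_eq : ρ₀ = G.mulVec ![aa, bb, cc] := by rw [← hgρ₀, hback]
  set X := toR3 (G.mulVec ![1, 0, 0]) with hX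
  set Y := toR3 (G.mulVec ![0, 1, 0]) with hY
  set Z := toR3 (G.mulVec ![0, 0, 1]) with hZ
  have hφX : φ X = 0 := by rw [hX, ← hρu_eq]; exact hφu
  have hφY : φ Y = 0 := by
    have hv3 : toR3 ρv = ((-(n:ℤ) : ℤ) : ℝ) • X + (((n:ℤ) + 1 : ℤ) : ℝ) • Y + ((0:ℤ) : ℝ) • Z := by
      rw [hρv_eq]
      exact hdecomp (-(n:ℤ)) ((n:ℤ)+1) 0
    have hthis := hφv
    rw [hv3, map_add, map_add, _root_.map_smul, _root_.map_smul, _root_.map_smul] at hthis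
    simp only [smul_eq_mul, hφX] at hthis
    have hne : ((n:ℝ) + 1) ≠ 0 := by positivity
    have h' : ((n:ℝ) + 1) * φ Y = 0 := by
      push_cast at hthis
      linarith
    exact (mul_eq_zero.mp h').resolve_left hne
  have hφZ : 0 < φ Z := by rw [hZ, ← hρ₁_eq]; exact hφ1
  have hφρ₀ : φ (toR3 ρ₀) = (cc : ℝ) * φ Z := by
    have h03 : toR3 ρ₀ = (aa : ℝ) • X + (bb : ℝ) • Y + (cc : ℝ) • Z := by
      rw [hρ₀_eq]; exact hdecomp aa bb cc
    rw [h03, map_add, map_add, _root_.map_smul, _root_.map_smul, _root_.map_smul]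
    simp only [smul_eq_mul, hφX, hφY]
    ring
  have hccneg : cc < 0 := by
    by_contra hcon
    push_neg at hcon
    have h1 : (0:ℝ) ≤ (cc:ℝ) := by exact_mod_cast hcon
    have : 0 ≤ φ (toR3 ρ₀) := by
      rw [hφρ₀]
      exact mul_nonneg h1 (le_of_lt hφZ)
    linarith [hφ0]
  -- the linear form w₀ for T₀ and the plane relation
  obtain ⟨w₀, hw₀0, hw₀u, hw₀v⟩ := h.t₀.height_one
  set W := Matrix.vecMul w₀ G with hW
  have hWx : ∀ x : Fin 3 → ℤ, W ⬝ᵥ (g.mulVec x) = w₀ ⬝ᵥ x := by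
    intro x
    rw [hW, ← Matrix.dotProduct_mulVec, Matrix.mulVec_mulVec, hGg, Matrix.one_mulVec]
  have hWd : ∀ y : Fin 3 → ℤ, W ⬝ᵥ y = W 0 * y 0 + W 1 * y 1 + W 2 * y 2 := by
    intro y; simp [dotProduct, Fin.sum_univ_three]
  have hW0 : W 0 = 1 := by
    have := hWx ρu
    rw [hgρu, hWd, hw₀u] at this
    simp at this
    linarith
  have hW1 : W 1 = 1 := by
    have := hWx ρv
    rw [hgρv, hWd, hw₀v, hW0] at this
    simp at this
    have hne : ((n:ℤ) + 1) ≠ 0 := by positivity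
    have h' : ((n:ℤ) + 1) * W 1 = ((n:ℤ) + 1) * 1 := by ring_nf; ring_nf at this; linarith
    exact mul_left_cancel₀ hne h'
  set s := W 2 with hsW
  have hplane : aa + bb + s * cc = 1 := by
    have := hWx ρ₀
    rw [hgρ₀, hWd, hw₀0, hW0, hW1] at this
    simp at this
    linarith
  -- 2D data for T₀
  set uu : Fin 2 → ℤ := ![1 - aa, -cc] with huu
  set vv : Fin 2 → ℤ := ![-(n:ℤ) - aa, -cc] with hvv
  have hsub0u : g.mulVec (ρu - ρ₀) = ![1 - aa, -bb, -cc] := by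
    rw [Matrix.mulVec_sub, hgρu, hgρ₀]
    funext i; fin_cases i <;> simp
  have hsub0v : g.mulVec (ρv - ρ₀) = ![-(n:ℤ) - aa, (n:ℤ) + 1 - bb, -cc] := by
    rw [Matrix.mulVec_sub, hgρv, hgρ₀]
    funext i; fin_cases i <;> simp <;> ring
  have hguu : Int.gcd (uu 0) (uu 1) = 1 := by
    have h1 := gcd3_mulVec g hgdet (ρu - ρ₀)
    rw [hsub0u, ← lattice_eq_gcd3 ρ₀ ρu, hL0u] at h1
    have h2 : gcd3 ![1 - aa, -bb, -cc] = Int.gcd (1 - aa) (-cc) := by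
      unfold gcd3
      apply gcd_plane _ _ _ s
      simp
      linarith
    rw [huu]
    simp only [Matrix.cons_val_zero, Matrix.cons_val_one, Matrix.head_cons]
    rw [← h2, h1]
  have hgvv : Int.gcd (vv 0) (vv 1) = 1 := by
    have h1 := gcd3_mulVec g hgdet (ρv - ρ₀)
    rw [hsub0v, ← lattice_eq_gcd3 ρ₀ ρv, hL0v] at h1
    have h2 : gcd3 ![-(n:ℤ) - aa, (n:ℤ) + 1 - bb, -cc] = Int.gcd (-(n:ℤ) - aa) (-cc) := by
      unfold gcd3
      apply gcd_plane _ _ _ s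
      simp
      linarith
    rw [hvv]
    simp only [Matrix.cons_val_zero, Matrix.cons_val_one, Matrix.head_cons]
    rw [← h2, h1]
  have hguv : Int.gcd (vv 0 - uu 0) (vv 1 - uu 1) = n + 1 := by
    rw [huu, hvv]
    simp only [Matrix.cons_val_zero, Matrix.cons_val_one, Matrix.head_cons]
    have he1 : (-(n:ℤ) - aa) - (1 - aa) = -((n:ℤ) + 1) := by ring
    have he2 : (-cc) - (-cc) = (0:ℤ) := by ring
    rw [he1, he2]
    rw [Int.gcd]
    simp
    omega
  -- emptiness for uu, vv
  have hempty0 : empty2 uu vv := by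
    intro pt ⟨t₁, t₂, t₃, ht₁, ht₂, ht₃, hsum, hpt0, hpt1⟩
    rw [huu, hvv] at hpt0 hpt1
    simp only [Matrix.cons_val_zero, Matrix.cons_val_one, Matrix.head_cons] at hpt0 hpt1
    have hplaneR : (aa:ℝ) + (bb:ℝ) + (s:ℝ) * (cc:ℝ) = 1 := by exact_mod_cast hplane
    have hmem : toR3 (![aa + pt 0, bb - pt 0 - s * pt 1, cc + pt 1] : Fin 3 → ℤ)
        ∈ relIntTriangle (toR3 (g.mulVec ρ₀)) (toR3 (g.mulVec ρu))
        (toR3 (g.mulVec ρv)) := by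
      refine ⟨t₁, t₂, t₃, ht₁, ht₂, ht₃, hsum, ?_⟩
      rw [hgρ₀, hgρu, hgρv]
      refine vec3_eq _ _ ?_ ?_ ?_ <;>
        simp only [toR3, Pi.add_apply, Pi.smul_apply, smul_eq_mul, Matrix.cons_val_zero,
          Matrix.cons_val_one, Matrix.head_cons, Matrix.cons_val_two, Matrix.tail_cons] <;>
        push_cast at hpt0 hpt1 ⊢
      · linear_combination hpt0 - (aa:ℝ) * hsum
      · linear_combination (-1 : ℝ) * hpt0 - (s:ℝ) * hpt1 + (t₂ + t₃) * hplaneR - (bb:ℝ) * hsum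
      · linear_combination hpt1 - (cc:ℝ) * hsum
    have hmem2 := relint_image G (g.mulVec ρ₀) (g.mulVec ρu) (g.mulVec ρv)
      ![aa + pt 0, bb - pt 0 - s * pt 1, cc + pt 1] hmem
    rw [hback, hback, hback] at hmem2
    exact h.t₀.no_interior_point (G.mulVec ![aa + pt 0, bb - pt 0 - s * pt 1, cc + pt 1]) hmem2
  obtain ⟨h0m, hd0m, h0u, h0v⟩ := twoD n hn uu vv hguu hgvv hguv hempty0
  -- determinant computation forces cc = -1
  have h0u0 := congrFun h0u 0
  have h0u1 := congrFun h0u 1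
  have h0v0 := congrFun h0v 0
  have h0v1 := congrFun h0v 1
  simp only [Matrix.mulVec, dotProduct, Fin.sum_univ_two, Matrix.cons_val_zero,
    Matrix.cons_val_one, Matrix.head_cons] at h0u0 h0u1 h0v0 h0v1
  have hMdet : h0m.det * (uu 0 * vv 1 - vv 0 * uu 1) = (n:ℤ) + 1 := by
    have hprod : h0m * !![uu 0, vv 0; uu 1, vv 1] = !![1, -(n:ℤ); 0, (n:ℤ) + 1] := by
      refine mat2_eq _ _ ?_ ?_ ?_ ?_ <;>
        simp only [Matrix.mul_apply, Fin.sum_univ_two, Matrix.cons_val_zero, Matrix.cons_val_one,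
          Matrix.head_cons, Matrix.of_apply, Matrix.cons_val', Matrix.empty_val',
          Matrix.cons_val_fin_one, Matrix.head_fin_const]
      · linarith [h0u0]
      · linarith [h0v0]
      · linarith [h0u1]
      · linarith [h0v1]
    have := congrArg Matrix.det hprod
    rw [Matrix.det_mul, Matrix.det_fin_two_of, Matrix.det_fin_two_of] at this
    linear_combination this
  have hdetM : uu 0 * vv 1 - vv 0 * uu 1 = -cc * ((n:ℤ) + 1) := by
    rw [huu, hvv]
    simp only [Matrix.cons_val_zero, Matrix.cons_val_one, Matrix.head_cons]
    ring
  have hne : ((n:ℤ) + 1) ≠ 0 := by positivity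
  have hcc1 : cc = -1 := by
    rcases hd0m with hd | hd
    · rw [hd, one_mul, hdetM] at hMdet
      have : -cc * ((n:ℤ)+1) = 1 * ((n:ℤ)+1) := by linarith
      have := mul_right_cancel₀ hne this
      omega
    · rw [hd, hdetM] at hMdet
      have : -cc * ((n:ℤ)+1) = -1 * ((n:ℤ)+1) := by linarith
      have := mul_right_cancel₀ hne this
      omega
  refine ⟨g, hgdet, aa, bb, ?_, hgρ₁, hgρu, hgρv⟩
  rw [hgρ₀, hcc1]

end Main
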